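/- arXiv:1208.2832 — 9 statements merged into one kernel-verified Lean document; each statement's English description precedes it below -/
import Mathlib

section
/- Let ν ≥ 1 and r ≥ 1 be natural numbers, let m = r·2^{ν−1}, and let z be a complex number with |z| ≤ 2^{-2^{ν−1}}. Then |exp(z) − Σ_{i=0}^{r} z^i / i!| < 2^{-m}. -/
/-- In the FEE method: if `m = r·2^{ν-1}` and `|z| ≤ 2^{-2^{ν-1}}`, then the
residual of the Taylor series of `exp` truncated after `r` terms is smaller
than `2^{-m}`. -/
theorem exp_taylor_residual_lt_FEE (ν r : ℕ) (hν : 1 ≤ ν) (hr : 1 ≤ r)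
    (m : ℕ) (hm : m = r * 2 ^ (ν - 1))
    (z : ℂ) (hz : ‖z‖ ≤ 2 ^ (-(2 ^ (ν - 1) : ℤ))) :
    ‖Complex.exp z - ∑ i ∈ Finset.range (r + 1), z ^ i / (Nat.factorial i : ℂ)‖ <
      2 ^ (-(m : ℤ)) := by
  set e : ℕ := 2 ^ (ν - 1) with he
  have he1 : 1 ≤ e := Nat.one_le_two_pow
  have hz' : ‖z‖ ≤ (2:ℝ) ^ (-(e:ℤ)) := by
    refine hz.trans_eq ?_
    congr 1
  have hz1 : ‖z‖ ≤ 1 :=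
    hz'.trans (zpow_le_one_of_nonpos₀ one_le_two (neg_nonpos.mpr (by positivity)))
  have key := Complex.exp_bound hz1 (n := r + 1) (Nat.succ_pos r)
  have hC : ((r + 1).succ : ℝ) * (((r + 1).factorial * (r + 1) : ℕ) : ℝ)⁻¹ ≤ 1 := by
    rw [mul_inv_le_iff₀ (by positivity), one_mul]
    have : (r + 1).succ ≤ (r + 1).factorial * (r + 1) := by
      calc (r + 1).succ = r + 2 := rfl
        _ ≤ (r + 1) * (r + 1) := by nlinarith
        _ ≤ (r + 1).factorial * (r + 1) := by
            exact Nat.mul_le_mul_right _ (Nat.self_le_factorial _)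
    exact_mod_cast this
  have hzr : ‖z‖ ^ (r + 1) ≤ (2:ℝ) ^ (-(m:ℤ)) * 2 ^ (-(e:ℤ)) := by
    calc ‖z‖ ^ (r + 1) ≤ ((2:ℝ) ^ (-(e:ℤ))) ^ (r + 1) := by
          exact pow_le_pow_left₀ (norm_nonneg z) hz' _
      _ = (2:ℝ) ^ (-(m:ℤ)) * 2 ^ (-(e:ℤ)) := by
          rw [← zpow_natCast ((2:ℝ) ^ (-(e:ℤ))), ← zpow_mul, ← zpow_add₀ (two_ne_zero)]
          congr 1
          have : (m : ℤ) = r * e := by exact_mod_cast hm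
          push_cast [this]
          ring
  calc ‖Complex.exp z - ∑ i ∈ Finset.range (r + 1), z ^ i / (Nat.factorial i : ℂ)‖
      ≤ ‖z‖ ^ (r + 1) * (((r + 1).succ : ℝ) * (((r + 1).factorial * (r + 1) : ℕ) : ℝ)⁻¹) := by
        exact_mod_cast key
    _ ≤ ((2:ℝ) ^ (-(m:ℤ)) * 2 ^ (-(e:ℤ))) * 1 := by
        apply mul_le_mul hzr hC (by positivity) (by positivity)
    _ < 2 ^ (-(m:ℤ)) := by
        rw [mul_one]
        have h2 : (2:ℝ) ^ (-(e:ℤ)) < 1 := by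
          apply zpow_lt_one_of_neg₀ one_lt_two
          exact neg_neg_of_pos (by exact_mod_cast he1)
        nlinarith [zpow_pos (show (0:ℝ) < 2 by norm_num) (-(m:ℤ))]
end

section
/- Let z be a complex number and let k1 ≥ 1 and r1 ≥ 1 be natural numbers. For 1 ≤ t ≤ k1 define σ_t = Σ_{j=0}^{r1−1} z^j · ((t−1)·r1)! / ((t−1)·r1 + j)!, and for 2 ≤ t ≤ k1 define τ_t = z^{r1} · ((t−2)·r1)! / ((t−1)·r1)!. Define G_{k1} = σ_{k1} and, for t = k1−1 down to 1, G_t = σ_t + τ_{t+1}·G_{t+1}. Then G_1 = Σ_{i=0}^{k1·r1 − 1} z^i / i!, i.e., the partial sum of the exponential series of length k1·r1 equals the nested (Horner-type) expression σ_1 + τ_2[σ_2 + τ_3[σ_3 + … + τ_{k1−1}[σ_{k1−1} + τ_{k1}·σ_{k1}]]]. -/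
/-- The partial sum of the exponential series of length `k1·r1` equals the
nested (Horner-type) expression
`σ_1 + τ_2[σ_2 + τ_3[σ_3 + … + τ_{k1-1}[σ_{k1-1} + τ_{k1}·σ_{k1}]]]`,
where `σ_t = Σ_{j=0}^{r1-1} z^j·((t-1)r1)!/((t-1)r1+j)!` and
`τ_t = z^{r1}·((t-2)r1)!/((t-1)r1)!`. -/
theorem exp_partial_sum_nested (z : ℂ) (k1 r1 : ℕ) (hk1 : 1 ≤ k1) (hr1 : 1 ≤ r1)
    (σ τ : ℕ → ℂ)
    (hσ : ∀ t, 1 ≤ t → t ≤ k1 →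
      σ t = ∑ j ∈ Finset.range r1,
        z ^ j * (Nat.factorial ((t - 1) * r1) : ℂ) / (Nat.factorial ((t - 1) * r1 + j) : ℂ))
    (hτ : ∀ t, 2 ≤ t → t ≤ k1 →
      τ t = z ^ r1 * (Nat.factorial ((t - 2) * r1) : ℂ) / (Nat.factorial ((t - 1) * r1) : ℂ))
    (G : ℕ → ℂ)
    (hGtop : G k1 = σ k1)
    (hGstep : ∀ t, 1 ≤ t → t < k1 → G t = σ t + τ (t + 1) * G (t + 1)) :
    G 1 = ∑ i ∈ Finset.range (k1 * r1), z ^ i / (Nat.factorial i : ℂ) := by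
  have key : ∀ m t, 1 ≤ t → t + m = k1 →
      G t = ∑ i ∈ Finset.range ((m + 1) * r1),
        z ^ i * (Nat.factorial ((t - 1) * r1) : ℂ) / (Nat.factorial ((t - 1) * r1 + i) : ℂ) := by
    intro m
    induction m with
    | zero =>
      intro t ht htk
      simp only [Nat.add_zero] at htk
      subst htk
      rw [hGtop, hσ t ht le_rfl]
      simp
    | succ m ih =>
      intro t ht htk
      obtain ⟨s, rfl⟩ : ∃ s, t = s + 1 := ⟨t - 1, by omega⟩
      have htlt : s + 1 < k1 := by omega
      rw [hGstep _ ht htlt, ih (s + 1 + 1) (by omega) (by omega),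
        hσ _ ht htlt.le, hτ (s + 1 + 1) (by omega) (by omega)]
      have hsplit : (m + 1 + 1) * r1 = r1 + (m + 1) * r1 := by ring
      rw [hsplit, Finset.sum_range_add, Finset.mul_sum]
      congr 1
      apply Finset.sum_congr rfl
      intro i _
      simp only [Nat.add_sub_cancel, show s + 1 + 1 - 2 = s from by omega]
      have h2 : s * r1 + (r1 + i) = (s + 1) * r1 + i := by ring
      rw [h2]
      have hf1 : (Nat.factorial ((s + 1) * r1) : ℂ) ≠ 0 := Nat.cast_ne_zero.2 (Nat.factorial_ne_zero _)
      have hf2 : (Nat.factorial ((s + 1) * r1 + i) : ℂ) ≠ 0 := Nat.cast_ne_zero.2 (Nat.factorial_ne_zero _)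
      field_simp
      ring
  have := key (k1 - 1) 1 le_rfl (by omega)
  rw [this]
  have : (k1 - 1 + 1) * r1 = k1 * r1 := by
    congr 1; omega
  rw [this]
  simp [Nat.factorial]
end

section
/- (Lemma 3) Let k1 ≥ 1 and m1 ≥ 5 be natural numbers. Let σ_1, …, σ_{k1} and σ*_1, …, σ*_{k1} be real numbers with |σ_t| < 4/3 and |σ*_t − σ_t| ≤ 2^{-m1} for all t; let τ_2, …, τ_{k1} and τ*_2, …, τ*_{k1} be real numbers with |τ_t| ≤ 1/4 and |τ*_t − τ_t| ≤ 2^{-m1} for all t; let ε_2, …, ε_{k1} be real numbers with |ε_i| < 2^{-m1}. Define h_1 = σ*_{k1} and h_i = σ*_{k1−i+1} + τ*_{k1−i+2}·h_{i−1} + ε_i for 2 ≤ i ≤ k1. Then |h_i| < 2 for every i with 1 ≤ i ≤ k1. -/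
/-- (Lemma 3) The computed values `h_i` of the iterative evaluation of the
nested expression `σ_1 + τ_2[σ_2 + … + τ_{k1}σ_{k1}]` are bounded by `2`. -/
theorem lemma3_h_bound (k1 m1 : ℕ) (hk1 : 1 ≤ k1) (hm1 : 5 ≤ m1)
    (σ σs τ τs ε h : ℕ → ℝ)
    (hσ : ∀ t, 1 ≤ t → t ≤ k1 → |σ t| < 4 / 3)
    (hσs : ∀ t, 1 ≤ t → t ≤ k1 → |σs t - σ t| ≤ 2 ^ (-(m1 : ℤ)))
    (hτ : ∀ t, 2 ≤ t → t ≤ k1 → |τ t| ≤ 1 / 4)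
    (hτs : ∀ t, 2 ≤ t → t ≤ k1 → |τs t - τ t| ≤ 2 ^ (-(m1 : ℤ)))
    (hε : ∀ i, 2 ≤ i → i ≤ k1 → |ε i| < 2 ^ (-(m1 : ℤ)))
    (h1 : h 1 = σs k1)
    (hstep : ∀ i, 2 ≤ i → i ≤ k1 →
      h i = σs (k1 - i + 1) + τs (k1 - i + 2) * h (i - 1) + ε i) :
    ∀ i, 1 ≤ i → i ≤ k1 → |h i| < 2 := by
  have hpow : (2 : ℝ) ^ (-(m1 : ℤ)) ≤ 1 / 32 := by
    rw [show (1 : ℝ) / 32 = 2 ^ (-(5 : ℤ)) by norm_num]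
    exact zpow_le_zpow_right₀ (by norm_num) (by omega)
  -- bound on the approximations
  have hσsb : ∀ t, 1 ≤ t → t ≤ k1 → |σs t| < 4 / 3 + 1 / 32 := by
    intro t h1t htk
    have := hσ t h1t htk
    have h2 := hσs t h1t htk
    have : |σs t| ≤ |σs t - σ t| + |σ t| := by
      calc |σs t| = |(σs t - σ t) + σ t| := by ring_nf
        _ ≤ |σs t - σ t| + |σ t| := abs_add_le _ _
    linarith [hσ t h1t htk, hσs t h1t htk]
  have hτsb : ∀ t, 2 ≤ t → t ≤ k1 → |τs t| ≤ 1 / 4 + 1 / 32 := by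
    intro t h1t htk
    have : |τs t| ≤ |τs t - τ t| + |τ t| := by
      calc |τs t| = |(τs t - τ t) + τ t| := by ring_nf
        _ ≤ |τs t - τ t| + |τ t| := abs_add_le _ _
    linarith [hτ t h1t htk, hτs t h1t htk]
  intro i
  induction i with
  | zero => omega
  | succ n ih =>
    intro h1i hik
    rcases Nat.eq_zero_or_pos n with hn | hn
    · subst hn
      rw [h1]
      have := hσsb k1 hk1 le_rfl
      linarith
    · have h2 : 2 ≤ n + 1 := by omega
      have hhn : |h n| < 2 := ih (by omega) (by omega)
      rw [hstep (n + 1) h2 hik]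
      have e1 : |σs (k1 - (n + 1) + 1)| < 4 / 3 + 1 / 32 :=
        hσsb _ (by omega) (by omega)
      have e2 : |τs (k1 - (n + 1) + 2)| ≤ 1 / 4 + 1 / 32 :=
        hτsb _ (by omega) (by omega)
      have e3 : |ε (n + 1)| < 2 ^ (-(m1 : ℤ)) := hε _ h2 hik
      have hmul : |τs (k1 - (n + 1) + 2) * h (n + 1 - 1)| ≤ (1 / 4 + 1 / 32) * 2 := by
        rw [abs_mul, show n + 1 - 1 = n from rfl]
        exact mul_le_mul e2 hhn.le (abs_nonneg _) (by norm_num)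
      calc |σs (k1 - (n + 1) + 1) + τs (k1 - (n + 1) + 2) * h (n + 1 - 1) + ε (n + 1)|
          ≤ |σs (k1 - (n + 1) + 1)| + |τs (k1 - (n + 1) + 2) * h (n + 1 - 1)| + |ε (n + 1)| := by
            exact (abs_add_le _ _).trans (by linarith [abs_add_le (σs (k1 - (n + 1) + 1)) (τs (k1 - (n + 1) + 2) * h (n + 1 - 1))])
        _ < 2 := by linarith
end

section
/- (Lemma 4) Let k1 ≥ 3 and m1 ≥ 5 be natural numbers. Let σ_1, …, σ_{k1} and σ*_1, …, σ*_{k1} be real numbers with |σ_t| < 4/3 and |σ*_t − σ_t| ≤ 2^{-m1} for all t; let τ_2, …, τ_{k1} and τ*_2, …, τ*_{k1} be real numbers with |τ_t| ≤ 1/4 and |τ*_t − τ_t| ≤ 2^{-m1} for all t; let ε_2, …, ε_{k1} be real numbers with |ε_i| < 2^{-m1}. Define h_1 = σ*_{k1} and h_i = σ*_{k1−i+1} + τ*_{k1−i+2}·h_{i−1} + ε_i for 2 ≤ i ≤ k1, and define H_1 = σ_{k1} and H_i = σ_{k1−i+1} + τ_{k1−i+2}·H_{i−1} for 2 ≤ i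 ≤ k1. Then the total error satisfies |h_{k1} − H_{k1}| < 2^{-m1+k1}. -/
/-- (Lemma 4) The total error of the iterative evaluation of the nested
expression `σ_1 + τ_2[σ_2 + … + τ_{k1}σ_{k1}]` with working accuracy
`2^{-m1}` is smaller than `2^{-m1+k1}`. -/
theorem lemma4_error_bound (k1 m1 : ℕ) (hk1 : 3 ≤ k1) (hm1 : 5 ≤ m1)
    (σ σs τ τs ε h H : ℕ → ℝ)
    (hσ : ∀ t, 1 ≤ t → t ≤ k1 → |σ t| < 4 / 3)
    (hσs : ∀ t, 1 ≤ t → t ≤ k1 → |σs t - σ t| ≤ 2 ^ (-(m1 : ℤ)))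
    (hτ : ∀ t, 2 ≤ t → t ≤ k1 → |τ t| ≤ 1 / 4)
    (hτs : ∀ t, 2 ≤ t → t ≤ k1 → |τs t - τ t| ≤ 2 ^ (-(m1 : ℤ)))
    (hε : ∀ i, 2 ≤ i → i ≤ k1 → |ε i| < 2 ^ (-(m1 : ℤ)))
    (h1 : h 1 = σs k1)
    (hstep : ∀ i, 2 ≤ i → i ≤ k1 →
      h i = σs (k1 - i + 1) + τs (k1 - i + 2) * h (i - 1) + ε i)
    (H1 : H 1 = σ k1)
    (Hstep : ∀ i, 2 ≤ i → i ≤ k1 →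
      H i = σ (k1 - i + 1) + τ (k1 - i + 2) * H (i - 1)) :
    |h k1 - H k1| < 2 ^ (-(m1 : ℤ) + k1) := by
  set δ : ℝ := 2 ^ (-(m1 : ℤ)) with hδdef
  have hδpos : (0:ℝ) < δ := by positivity
  have hδle : δ ≤ 1/32 := by
    have : (2:ℝ) ^ (-(m1 : ℤ)) ≤ (2:ℝ) ^ (-(5:ℤ)) := by
      apply zpow_le_zpow_right₀ (by norm_num)
      omega
    rw [hδdef]
    norm_num at this ⊢
    linarith
  -- main induction: bound on |H i| and on the error
  have key : ∀ i, 1 ≤ i → i ≤ k1 → |H i| ≤ 16/9 ∧ |h i - H i| ≤ 6 * δ := by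
    intro i hi1
    induction i, hi1 using Nat.le_induction with
    | base =>
      intro _
      constructor
      · rw [H1]
        have := hσ k1 (by omega) le_rfl
        linarith [this]
      · rw [h1, H1]
        have := hσs k1 (by omega) le_rfl
        linarith
    | succ n hn ih =>
      intro hnk
      obtain ⟨hHn, hen⟩ := ih (by omega)
      set a := k1 - (n+1) + 1 with ha
      set b := k1 - (n+1) + 2 with hb
      have hσa := hσ a (by omega) (by omega)
      have hσsa := hσs a (by omega) (by omega)
      have hτb := hτ b (by omega) (by omega)
      have hτsb := hτs b (by omega) (by omega)
      have hεn := hε (n+1) (by omega) (by omega)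
      have hHeq : H (n+1) = σ a + τ b * H n := by
        have := Hstep (n+1) (by omega) (by omega)
        simpa using this
      have hheq : h (n+1) = σs a + τs b * h n + ε (n+1) := by
        have := hstep (n+1) (by omega) (by omega)
        simpa using this
      have hτsb' : |τs b| ≤ 9/32 := by
        have : |τs b| ≤ |τs b - τ b| + |τ b| := by
          calc |τs b| = |(τs b - τ b) + τ b| := by ring_nf
          _ ≤ |τs b - τ b| + |τ b| := abs_add_le _ _
        linarith
      constructor
      · rw [hHeq]
        have h1' : |σ a + τ b * H n| ≤ |σ a| + |τ b| * |H n| := by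
          calc |σ a + τ b * H n| ≤ |σ a| + |τ b * H n| := abs_add_le _ _
          _ = |σ a| + |τ b| * |H n| := by rw [abs_mul]
        have h2' : |τ b| * |H n| ≤ (1/4) * (16/9) :=
          mul_le_mul hτb hHn (abs_nonneg _) (by norm_num)
        linarith
      · have hd : h (n+1) - H (n+1) =
            (σs a - σ a) + (τs b * (h n - H n) + (τs b - τ b) * H n) + ε (n+1) := by
          rw [hheq, hHeq]; ring
        rw [hd]
        have t1 : |(σs a - σ a) + (τs b * (h n - H n) + (τs b - τ b) * H n) + ε (n+1)|
            ≤ |σs a - σ a| + (|τs b| * |h n - H n| + |τs b - τ b| * |H n|) + |ε (n+1)| := by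
          calc _ ≤ |σs a - σ a| + |τs b * (h n - H n) + (τs b - τ b) * H n| + |ε (n+1)| :=
                abs_add_three _ _ _
          _ ≤ _ := by
              have : |τs b * (h n - H n) + (τs b - τ b) * H n|
                  ≤ |τs b| * |h n - H n| + |τs b - τ b| * |H n| := by
                calc _ ≤ |τs b * (h n - H n)| + |(τs b - τ b) * H n| := abs_add_le _ _
                _ = _ := by rw [abs_mul, abs_mul]
              linarith
        have t2 : |τs b| * |h n - H n| ≤ (9/32) * (6 * δ) :=
          mul_le_mul hτsb' hen (abs_nonneg _) (by norm_num)
        have t3 : |τs b - τ b| * |H n| ≤ δ * (16/9) :=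
          mul_le_mul hτsb hHn (abs_nonneg _) hδpos.le
        linarith
  -- final step, strict inequality
  obtain ⟨hHn, hen⟩ := key (k1 - 1) (by omega) (by omega)
  have hσa := hσ (k1 - k1 + 1) (by omega) (by omega)
  have hσsa := hσs (k1 - k1 + 1) (by omega) (by omega)
  have hτb := hτ (k1 - k1 + 2) (by omega) (by omega)
  have hτsb := hτs (k1 - k1 + 2) (by omega) (by omega)
  have hεn := hε k1 (by omega) le_rfl
  set a := k1 - k1 + 1
  set b := k1 - k1 + 2
  have hHeq : H k1 = σ a + τ b * H (k1 - 1) := Hstep k1 (by omega) le_rfl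
  have hheq : h k1 = σs a + τs b * h (k1 - 1) + ε k1 := hstep k1 (by omega) le_rfl
  have hτsb' : |τs b| ≤ 9/32 := by
    have : |τs b| ≤ |τs b - τ b| + |τ b| := by
      calc |τs b| = |(τs b - τ b) + τ b| := by ring_nf
      _ ≤ |τs b - τ b| + |τ b| := abs_add_le _ _
    linarith
  have hd : h k1 - H k1 =
      (σs a - σ a) + (τs b * (h (k1-1) - H (k1-1)) + (τs b - τ b) * H (k1-1)) + ε k1 := by
    rw [hheq, hHeq]; ring
  have t1 : |h k1 - H k1|
      ≤ |σs a - σ a| + (|τs b| * |h (k1-1) - H (k1-1)| + |τs b - τ b| * |H (k1-1)|) + |ε k1| := by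
    rw [hd]
    calc _ ≤ |σs a - σ a| + |τs b * (h (k1-1) - H (k1-1)) + (τs b - τ b) * H (k1-1)| + |ε k1| :=
          abs_add_three _ _ _
    _ ≤ _ := by
        have : |τs b * (h (k1-1) - H (k1-1)) + (τs b - τ b) * H (k1-1)|
            ≤ |τs b| * |h (k1-1) - H (k1-1)| + |τs b - τ b| * |H (k1-1)| := by
          calc _ ≤ |τs b * (h (k1-1) - H (k1-1))| + |(τs b - τ b) * H (k1-1)| := abs_add_le _ _
          _ = _ := by rw [abs_mul, abs_mul]
        linarith
  have t2 : |τs b| * |h (k1-1) - H (k1-1)| ≤ (9/32) * (6 * δ) :=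
    mul_le_mul hτsb' hen (abs_nonneg _) (by norm_num)
  have t3 : |τs b - τ b| * |H (k1-1)| ≤ δ * (16/9) :=
    mul_le_mul hτsb hHn (abs_nonneg _) hδpos.le
  have hfinal : |h k1 - H k1| < 6 * δ := by linarith
  have hpow : (2:ℝ) ^ (-(m1 : ℤ) + k1) = δ * 2 ^ (k1:ℤ) := by
    rw [hδdef, ← zpow_add₀ (by norm_num : (2:ℝ) ≠ 0)]
  have h8 : (8:ℝ) ≤ 2 ^ (k1:ℤ) := by
    calc (8:ℝ) = 2 ^ (3:ℤ) := by norm_num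
    _ ≤ 2 ^ (k1:ℤ) := zpow_le_zpow_right₀ (by norm_num) (by omega)
  have : 6 * δ < δ * 2 ^ (k1:ℤ) := by nlinarith
  rw [hpow]
  linarith
end

section
/- Let m ≥ 4 and k1 be natural numbers with 3 ≤ k1 ≤ m, and set m1 = 2m + 1. Let σ_1, …, σ_{k1}, σ*_1, …, σ*_{k1}, τ_2, …, τ_{k1}, τ*_2, …, τ*_{k1}, ε_2, …, ε_{k1} be real numbers with |σ_t| < 4/3, |σ*_t − σ_t| ≤ 2^{-m1}, |τ_t| ≤ 1/4, |τ*_t − τ_t| ≤ 2^{-m1}, and |ε_i| < 2^{-m1}. Define h_1 = σ*_{k1}, h_i = σ*_{k1−i+1} + τ*_{k1−i+2}·h_{i−1} + ε_i for 2 ≤ i ≤ k1, and H_1 = σ_{k1}, H_i = σ_{k1−i+1} + τ_{k1−i+2}·H_{i−1} for 2 ≤ i ≤ k1. Then |h_{k1} − H_{k1}| ≤ 2^{-(m+1)}. -/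
/-- Choice of working precision in `RLinSpaceBinSplit`: taking `m1 = 2m + 1`
suffices to compute the nested expression with accuracy `2^{-(m+1)}`. -/
theorem precision_choice_binsplit (m k1 m1 : ℕ) (hm : 4 ≤ m)
    (hk1 : 3 ≤ k1) (hk1m : k1 ≤ m) (hm1 : m1 = 2 * m + 1)
    (σ σs τ τs ε h H : ℕ → ℝ)
    (hσ : ∀ t, 1 ≤ t → t ≤ k1 → |σ t| < 4 / 3)
    (hσs : ∀ t, 1 ≤ t → t ≤ k1 → |σs t - σ t| ≤ 2 ^ (-(m1 : ℤ)))
    (hτ : ∀ t, 2 ≤ t → t ≤ k1 → |τ t| ≤ 1 / 4)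
    (hτs : ∀ t, 2 ≤ t → t ≤ k1 → |τs t - τ t| ≤ 2 ^ (-(m1 : ℤ)))
    (hε : ∀ i, 2 ≤ i → i ≤ k1 → |ε i| < 2 ^ (-(m1 : ℤ)))
    (h1 : h 1 = σs k1)
    (hstep : ∀ i, 2 ≤ i → i ≤ k1 →
      h i = σs (k1 - i + 1) + τs (k1 - i + 2) * h (i - 1) + ε i)
    (H1 : H 1 = σ k1)
    (Hstep : ∀ i, 2 ≤ i → i ≤ k1 →
      H i = σ (k1 - i + 1) + τ (k1 - i + 2) * H (i - 1)) :
    |h k1 - H k1| ≤ 2 ^ (-((m : ℤ) + 1)) := by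
  set c : ℝ := 2 ^ (-(m1 : ℤ)) with hc_def
  have hc : 0 < c := by positivity
  have hcsmall : c ≤ 1 / 4 := by
    have h1 : (2 : ℝ) ^ (-(m1 : ℤ)) ≤ 2 ^ (-2 : ℤ) := by
      apply zpow_le_zpow_right₀ one_le_two
      omega
    calc c ≤ 2 ^ (-2 : ℤ) := h1
    _ = 1 / 4 := by norm_num
  have key : ∀ i, 1 ≤ i → i ≤ k1 → |H i| ≤ 16 / 9 ∧ |h i - H i| ≤ 8 * c := by
    intro i hi
    induction i, hi using Nat.le_induction with
    | base =>
      intro _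
      constructor
      · rw [H1]
        have := hσ k1 (by omega) le_rfl
        linarith
      · rw [h1, H1]
        have := hσs k1 (by omega) le_rfl
        have : |σs k1 - σ k1| ≤ c := this
        linarith
    | succ i hi ih =>
      intro hik
      obtain ⟨ihH, ihe⟩ := ih (by omega)
      have hi2 : 2 ≤ i + 1 := by omega
      have hidx1 : 1 ≤ k1 - (i + 1) + 1 := by omega
      have hidx1' : k1 - (i + 1) + 1 ≤ k1 := by omega
      have hidx2 : 2 ≤ k1 - (i + 1) + 2 := by omega
      have hidx2' : k1 - (i + 1) + 2 ≤ k1 := by omega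
      have hHrec := Hstep (i + 1) hi2 hik
      have hhrec := hstep (i + 1) hi2 hik
      simp only [Nat.add_sub_cancel] at hHrec hhrec
      set t1 := k1 - (i + 1) + 1
      set t2 := k1 - (i + 1) + 2
      have hσ1 : |σ t1| < 4 / 3 := hσ t1 hidx1 hidx1'
      have hσs1 : |σs t1 - σ t1| ≤ c := hσs t1 hidx1 hidx1'
      have hτ2 : |τ t2| ≤ 1 / 4 := hτ t2 hidx2 hidx2'
      have hτs2 : |τs t2 - τ t2| ≤ c := hτs t2 hidx2 hidx2'
      have hε2 : |ε (i + 1)| < c := hε (i + 1) hi2 hik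
      constructor
      · rw [hHrec]
        calc |σ t1 + τ t2 * H i| ≤ |σ t1| + |τ t2| * |H i| := by
              calc |σ t1 + τ t2 * H i| ≤ |σ t1| + |τ t2 * H i| := abs_add_le _ _
              _ = |σ t1| + |τ t2| * |H i| := by rw [abs_mul]
        _ ≤ 4 / 3 + (1 / 4) * (16 / 9) := by
              have h0 : (0:ℝ) ≤ |H i| := abs_nonneg _
              have h0' : (0:ℝ) ≤ |τ t2| := abs_nonneg _
              nlinarith
        _ = 16 / 9 := by norm_num
      · rw [hHrec, hhrec]
        have hdecomp : σs t1 + τs t2 * h i + ε (i + 1) - (σ t1 + τ t2 * H i)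
            = (σs t1 - σ t1) + (τs t2 * (h i - H i) + (τs t2 - τ t2) * H i) + ε (i + 1) := by
          ring
        rw [hdecomp]
        have hτsb : |τs t2| ≤ 1 / 2 := by
          have : |τs t2| ≤ |τs t2 - τ t2| + |τ t2| := by
            calc |τs t2| = |(τs t2 - τ t2) + τ t2| := by ring_nf
            _ ≤ |τs t2 - τ t2| + |τ t2| := abs_add_le _ _
          linarith
        have b1 : |τs t2 * (h i - H i)| ≤ (1 / 2) * (8 * c) := by
          rw [abs_mul]
          have h0 : (0:ℝ) ≤ |h i - H i| := abs_nonneg _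
          have h0' : (0:ℝ) ≤ |τs t2| := abs_nonneg _
          nlinarith
        have b2 : |(τs t2 - τ t2) * H i| ≤ c * (16 / 9) := by
          rw [abs_mul]
          have h0 : (0:ℝ) ≤ |H i| := abs_nonneg _
          have h0' : (0:ℝ) ≤ |τs t2 - τ t2| := abs_nonneg _
          nlinarith
        calc |(σs t1 - σ t1) + (τs t2 * (h i - H i) + (τs t2 - τ t2) * H i) + ε (i + 1)|
            ≤ |(σs t1 - σ t1) + (τs t2 * (h i - H i) + (τs t2 - τ t2) * H i)| + |ε (i + 1)| :=
              abs_add_le _ _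
        _ ≤ |σs t1 - σ t1| + |τs t2 * (h i - H i) + (τs t2 - τ t2) * H i| + |ε (i + 1)| := by
              have := abs_add_le (σs t1 - σ t1) (τs t2 * (h i - H i) + (τs t2 - τ t2) * H i)
              linarith
        _ ≤ |σs t1 - σ t1| + (|τs t2 * (h i - H i)| + |(τs t2 - τ t2) * H i|) + |ε (i + 1)| := by
              have := abs_add_le (τs t2 * (h i - H i)) ((τs t2 - τ t2) * H i)
              linarith
        _ ≤ c + ((1 / 2) * (8 * c) + c * (16 / 9)) + c := by linarith
        _ ≤ 8 * c := by linarith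
  obtain ⟨_, hfin⟩ := key k1 (by omega) le_rfl
  have h8 : 8 * c = 2 ^ ((3 : ℤ) + -(m1 : ℤ)) := by
    rw [zpow_add₀ (by norm_num : (2:ℝ) ≠ 0)]
    norm_num [hc_def]
  have hmono : (2 : ℝ) ^ ((3 : ℤ) + -(m1 : ℤ)) ≤ 2 ^ (-((m : ℤ) + 1)) := by
    apply zpow_le_zpow_right₀ one_le_two
    omega
  linarith [hfin, h8 ▸ hfin, hmono, h8]
end

section
/- (Lemma 6) Let m ≥ 16 and k ≥ 1 be natural numbers. Let γ_2, …, γ_{k+1} be real numbers with |γ_i| ≤ 1/4; let e*_2, …, e*_{k+1} be real numbers with |e*_i − exp(γ_i)| ≤ 2^{-m}; let ε_3, …, ε_{k+1} be real numbers with |ε_i| < 2^{-m}. Define h_2 = e*_2 and h_i = h_{i−1}·e*_i + ε_i for 3 ≤ i ≤ k+1, and define H_2 = exp(γ_2) and H_i = H_{i−1}·exp(γ_i) for 3 ≤ i ≤ k+1 (so H_{k+1} = exp(γ_2)·exp(γ_3)···exp(γ_{k+1})). Then the total error satisfies |h_{k+1} − H_{k+1}| < 2^{-m+2(k+1)}.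 -/
/-- (Lemma 6) The total error of the iterative computation of the product
`exp(γ_2)·exp(γ_3)···exp(γ_{k+1})` in the modified FEE method is smaller
than `2^{-m+2(k+1)}`. -/
theorem lemma6_fee_error_bound (m k : ℕ) (hm : 16 ≤ m) (hk : 1 ≤ k)
    (γ es ε h H : ℕ → ℝ)
    (hγ : ∀ i, 2 ≤ i → i ≤ k + 1 → |γ i| ≤ 1 / 4)
    (hes : ∀ i, 2 ≤ i → i ≤ k + 1 → |es i - Real.exp (γ i)| ≤ 2 ^ (-(m : ℤ)))
    (hε : ∀ i, 3 ≤ i → i ≤ k + 1 → |ε i| < 2 ^ (-(m : ℤ)))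
    (h2 : h 2 = es 2)
    (hstep : ∀ i, 3 ≤ i → i ≤ k + 1 → h i = h (i - 1) * es i + ε i)
    (H2 : H 2 = Real.exp (γ 2))
    (Hstep : ∀ i, 3 ≤ i → i ≤ k + 1 → H i = H (i - 1) * Real.exp (γ i)) :
    |h (k + 1) - H (k + 1)| < 2 ^ (-(m : ℤ) + 2 * (k + 1)) := by
  set δ : ℝ := 2 ^ (-(m : ℤ)) with hδdef
  have hδpos : 0 < δ := by positivity
  have hδle : δ ≤ 1 / 2 := by
    rw [hδdef]
    calc (2:ℝ) ^ (-(m:ℤ)) ≤ (2:ℝ) ^ (-1:ℤ) := by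
          apply zpow_le_zpow_right₀ (by norm_num)
          omega
      _ = 1 / 2 := by norm_num
  have hexp14 : Real.exp (1/4) ≤ 3/2 := by
    have h4 : Real.exp (1/4) ^ (4:ℕ) = Real.exp 1 := by
      rw [← Real.exp_nat_mul]; norm_num
    refine le_of_pow_le_pow_left₀ (n := 4) (by norm_num) (by norm_num) ?_
    rw [h4]
    have := Real.exp_one_lt_d9
    norm_num
    linarith
  have hexpγ : ∀ i, 2 ≤ i → i ≤ k + 1 → Real.exp (γ i) ≤ 3/2 := by
    intro i h1 h2'
    exact le_trans (Real.exp_le_exp.2 (le_trans (le_abs_self _) (hγ i h1 h2'))) hexp14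
  have hesabs : ∀ i, 2 ≤ i → i ≤ k + 1 → |es i| ≤ 2 := by
    intro i h1 h2'
    have t1 := hes i h1 h2'
    have t2 := hexpγ i h1 h2'
    have t3 : (0:ℝ) < Real.exp (γ i) := Real.exp_pos _
    have := abs_sub_abs_le_abs_sub (es i) (Real.exp (γ i))
    rw [abs_of_pos t3] at this
    linarith
  have key : ∀ i, 2 ≤ i → i ≤ k + 1 →
      |h i - H i| ≤ δ * (4 ^ (i-1) - 2) ∧ H i ≤ (3/2:ℝ) ^ (i-1) ∧ 0 < H i := by
    intro i hi
    induction i, hi using Nat.le_induction with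
    | base =>
      intro hle
      refine ⟨?_, ?_, ?_⟩
      · rw [h2, H2]
        have := hes 2 le_rfl hle
        norm_num
        linarith
      · rw [H2]
        simpa using hexpγ 2 le_rfl hle
      · rw [H2]; exact Real.exp_pos _
    | succ i hi ih =>
      intro hile
      obtain ⟨n, rfl⟩ : ∃ n, i = n + 1 := ⟨i - 1, by omega⟩
      have hi' : n + 1 ≤ k + 1 := by omega
      obtain ⟨ihΔ, ihH, ihpos⟩ := ih hi'
      simp only [Nat.add_sub_cancel] at ihΔ ihH ⊢
      have h3 : 3 ≤ n + 1 + 1 := by omega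
      have hstep' := hstep (n+1+1) h3 hile
      have Hstep' := Hstep (n+1+1) h3 hile
      simp only [Nat.add_sub_cancel] at hstep' Hstep'
      set eγ := Real.exp (γ (n+1+1)) with heγ
      have heγpos : 0 < eγ := Real.exp_pos _
      have heγle : eγ ≤ 3/2 := hexpγ _ (by omega) hile
      have hdiff : |es (n+1+1) - eγ| ≤ δ := hes _ (by omega) hile
      have hesle : |es (n+1+1)| ≤ 2 := hesabs _ (by omega) hile
      have hepsle : |ε (n+1+1)| ≤ δ := (hε _ h3 hile).le
      have h4n : (4:ℝ) ≤ 4 ^ n := by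
        calc (4:ℝ) = 4 ^ 1 := by norm_num
          _ ≤ 4 ^ n := pow_le_pow_right₀ (by norm_num) (by omega)
      have hpow : ((3:ℝ)/2) ^ n ≤ 4 ^ n := pow_le_pow_left₀ (by norm_num) (by norm_num) n
      have t1 : |h (n+1+1) - H (n+1+1)| ≤
          |h (n+1) - H (n+1)| * |es (n+1+1)| + H (n+1) * |es (n+1+1) - eγ| + |ε (n+1+1)| := by
        rw [hstep', Hstep']
        have e1 : h (n+1) * es (n+1+1) + ε (n+1+1) - H (n+1) * eγ =
            ((h (n+1) - H (n+1)) * es (n+1+1) + H (n+1) * (es (n+1+1) - eγ)) + ε (n+1+1) := by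
          ring
        rw [e1]
        calc |((h (n+1) - H (n+1)) * es (n+1+1) + H (n+1) * (es (n+1+1) - eγ)) + ε (n+1+1)|
            ≤ |(h (n+1) - H (n+1)) * es (n+1+1) + H (n+1) * (es (n+1+1) - eγ)| + |ε (n+1+1)| :=
              abs_add_le _ _
          _ ≤ |(h (n+1) - H (n+1)) * es (n+1+1)| + |H (n+1) * (es (n+1+1) - eγ)| + |ε (n+1+1)| := by
              linarith [abs_add_le ((h (n+1) - H (n+1)) * es (n+1+1)) (H (n+1) * (es (n+1+1) - eγ))]
          _ = |h (n+1) - H (n+1)| * |es (n+1+1)| + H (n+1) * |es (n+1+1) - eγ| + |ε (n+1+1)| := by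
              rw [abs_mul, abs_mul, abs_of_pos ihpos]
      have m1 : |h (n+1) - H (n+1)| * |es (n+1+1)| ≤ δ * (4 ^ n - 2) * 2 :=
        mul_le_mul ihΔ hesle (abs_nonneg _) (by nlinarith)
      have m2 : H (n+1) * |es (n+1+1) - eγ| ≤ (3/2:ℝ) ^ n * δ :=
        mul_le_mul ihH hdiff (abs_nonneg _) (by positivity)
      refine ⟨?_, ?_, ?_⟩
      · rw [pow_succ]
        nlinarith [mul_le_mul_of_nonneg_left hpow hδpos.le]
      · rw [Hstep', pow_succ]
        exact mul_le_mul ihH heγle heγpos.le (by positivity)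
      · rw [Hstep']
        exact mul_pos ihpos heγpos
  obtain ⟨hΔ, -, -⟩ := key (k+1) (by omega) le_rfl
  simp only [Nat.add_sub_cancel] at hΔ
  have hfinal : (2:ℝ) ^ (-(m : ℤ) + 2 * (k + 1)) = δ * 4 ^ (k+1) := by
    rw [hδdef, zpow_add₀ (by norm_num : (2:ℝ) ≠ 0)]
    congr 1
    have he : (2:ℤ) * ((k:ℤ) + 1) = ((2*(k+1) : ℕ) : ℤ) := by push_cast; ring
    rw [he, zpow_natCast, pow_mul]
    norm_num
  rw [hfinal]
  have hlt : δ * (4 ^ k - 2) < δ * 4 ^ (k+1) := by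
    apply mul_lt_mul_of_pos_left ?_ hδpos
    have : (0:ℝ) < 4 ^ k := by positivity
    rw [pow_succ]
    nlinarith
  linarith
end

section
/- (Complex analogue of Lemma 3) Let k1 ≥ 1 and m1 ≥ 5 be natural numbers. Let σ_1, …, σ_{k1} and σ*_1, …, σ*_{k1} be complex numbers with |σ_t| < 4/3 and |σ*_t − σ_t| ≤ 2^{-m1} for all t; let τ_2, …, τ_{k1} and τ*_2, …, τ*_{k1} be complex numbers with |τ_t| ≤ 1/4 and |τ*_t − τ_t| ≤ 2^{-m1} for all t; let ε_2, …, ε_{k1} be complex numbers with |ε_i| < 2^{-m1}. Define h_1 = σ*_{k1} and h_i = σ*_{k1−i+1} + τ*_{k1−i+2}·h_{i−1} + ε_i for 2 ≤ i ≤ k1. Then |h_i| < 2 for every i with 1 ≤ i ≤ k1. -/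
/-- (Complex analogue of Lemma 3) The computed values `h_i` of the iterative
evaluation of the nested expression `σ_1 + τ_2[σ_2 + … + τ_{k1}σ_{k1}]` with
complex blocks are bounded by `2`. -/
theorem lemma3_complex_h_bound (k1 m1 : ℕ) (hk1 : 1 ≤ k1) (hm1 : 5 ≤ m1)
    (σ σs τ τs ε h : ℕ → ℂ)
    (hσ : ∀ t, 1 ≤ t → t ≤ k1 → ‖σ t‖ < 4 / 3)
    (hσs : ∀ t, 1 ≤ t → t ≤ k1 → ‖σs t - σ t‖ ≤ 2 ^ (-(m1 : ℤ)))
    (hτ : ∀ t, 2 ≤ t → t ≤ k1 → ‖τ t‖ ≤ 1 / 4)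
    (hτs : ∀ t, 2 ≤ t → t ≤ k1 → ‖τs t - τ t‖ ≤ 2 ^ (-(m1 : ℤ)))
    (hε : ∀ i, 2 ≤ i → i ≤ k1 → ‖ε i‖ < 2 ^ (-(m1 : ℤ)))
    (h1 : h 1 = σs k1)
    (hstep : ∀ i, 2 ≤ i → i ≤ k1 →
      h i = σs (k1 - i + 1) + τs (k1 - i + 2) * h (i - 1) + ε i) :
    ∀ i, 1 ≤ i → i ≤ k1 → ‖h i‖ < 2 := by
  have hc : (2:ℝ) ^ (-(m1 : ℤ)) ≤ 1/32 := by
    have h5 : (2:ℝ) ^ (-(m1 : ℤ)) ≤ 2 ^ (-(5:ℤ)) := by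
      apply zpow_le_zpow_right₀ one_le_two
      omega
    have h32 : ((2:ℝ)) ^ (-(5:ℤ)) = 1/32 := by
      rw [zpow_neg, one_div]
      norm_num
    rw [h32] at h5
    exact h5
  -- a generic bound for σs entries
  have hσsb : ∀ t, 1 ≤ t → t ≤ k1 → ‖σs t‖ < 4/3 + 1/32 := by
    intro t h1t htk
    have htri : ‖σs t‖ ≤ ‖σ t‖ + ‖σs t - σ t‖ := by
      have := norm_add_le (σ t) (σs t - σ t)
      simpa using this
    have := hσ t h1t htk
    have := hσs t h1t htk
    linarith
  have hτsb : ∀ t, 2 ≤ t → t ≤ k1 → ‖τs t‖ ≤ 1/4 + 1/32 := by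
    intro t h2t htk
    have htri : ‖τs t‖ ≤ ‖τ t‖ + ‖τs t - τ t‖ := by
      have := norm_add_le (τ t) (τs t - τ t)
      simpa using this
    have := hτ t h2t htk
    have := hτs t h2t htk
    linarith
  intro i
  induction i using Nat.strong_induction_on with
  | _ i ih =>
    intro hi1 hik
    rcases eq_or_lt_of_le hi1 with h1e | hi2
    · rw [← h1e, h1]
      have := hσsb k1 hk1 le_rfl
      linarith
    · rw [hstep i hi2 hik]
      have hprev := ih (i-1) (by omega) (by omega) (by omega)
      have hA := hσsb (k1 - i + 1) (by omega) (by omega)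
      have hB := hτsb (k1 - i + 2) (by omega) (by omega)
      have hE : ‖ε i‖ < 1/32 := lt_of_lt_of_le (hε i hi2 hik) hc
      have htri1 : ‖σs (k1 - i + 1) + τs (k1 - i + 2) * h (i - 1) + ε i‖
          ≤ ‖σs (k1 - i + 1)‖ + ‖τs (k1 - i + 2)‖ * ‖h (i-1)‖
            + ‖ε i‖ := by
        calc ‖σs (k1 - i + 1) + τs (k1 - i + 2) * h (i - 1) + ε i‖
            ≤ ‖σs (k1 - i + 1) + τs (k1 - i + 2) * h (i - 1)‖ + ‖ε i‖ :=
              norm_add_le _ _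
          _ ≤ ‖σs (k1 - i + 1)‖ + ‖τs (k1 - i + 2) * h (i - 1)‖
              + ‖ε i‖ := by
              have := norm_add_le (σs (k1 - i + 1)) (τs (k1 - i + 2) * h (i - 1))
              linarith
          _ = _ := by rw [norm_mul]
      have hτnn : (0:ℝ) ≤ ‖τs (k1 - i + 2)‖ := norm_nonneg _
      have hhnn : (0:ℝ) ≤ ‖h (i-1)‖ := norm_nonneg _
      nlinarith
end

section
/- (Complex analogue of Lemma 4) Let k1 ≥ 3 and m1 ≥ 5 be natural numbers. Let σ_1, …, σ_{k1} and σ*_1, …, σ*_{k1} be complex numbers with |σ_t| < 4/3 and |σ*_t − σ_t| ≤ 2^{-m1} for all t; let τ_2, …, τ_{k1} and τ*_2, …, τ*_{k1} be complex numbers with |τ_t| ≤ 1/4 and |τ*_t − τ_t| ≤ 2^{-m1} for all t; let ε_2, …, ε_{k1} be complex numbers with |ε_i| < 2^{-m1}. Define h_1 = σ*_{k1} and h_i = σ*_{k1−i+1} + τ*_{k1−i+2}·h_{i−1} + ε_i for 2 ≤ i ≤ k1, and define H_1 = σ_{k1} and H_i = σ_{k1−i+1} + τ_{k1−i+2}·H_{i−1}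 for 2 ≤ i ≤ k1. Then |h_{k1} − H_{k1}| < 2^{-m1+k1}. -/
/-- (Complex analogue of Lemma 4) The total error of the iterative evaluation
of the nested expression `σ_1 + τ_2[σ_2 + … + τ_{k1}σ_{k1}]` with complex
blocks and working accuracy `2^{-m1}` is smaller than `2^{-m1+k1}`. -/
theorem lemma4_complex_error_bound (k1 m1 : ℕ) (hk1 : 3 ≤ k1) (hm1 : 5 ≤ m1)
    (σ σs τ τs ε h H : ℕ → ℂ)
    (hσ : ∀ t, 1 ≤ t → t ≤ k1 → ‖σ t‖ < 4 / 3)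
    (hσs : ∀ t, 1 ≤ t → t ≤ k1 → ‖σs t - σ t‖ ≤ 2 ^ (-(m1 : ℤ)))
    (hτ : ∀ t, 2 ≤ t → t ≤ k1 → ‖τ t‖ ≤ 1 / 4)
    (hτs : ∀ t, 2 ≤ t → t ≤ k1 → ‖τs t - τ t‖ ≤ 2 ^ (-(m1 : ℤ)))
    (hε : ∀ i, 2 ≤ i → i ≤ k1 → ‖ε i‖ < 2 ^ (-(m1 : ℤ)))
    (h1 : h 1 = σs k1)
    (hstep : ∀ i, 2 ≤ i → i ≤ k1 →
      h i = σs (k1 - i + 1) + τs (k1 - i + 2) * h (i - 1) + ε i)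
    (H1 : H 1 = σ k1)
    (Hstep : ∀ i, 2 ≤ i → i ≤ k1 →
      H i = σ (k1 - i + 1) + τ (k1 - i + 2) * H (i - 1)) :
    ‖h k1 - H k1‖ < 2 ^ (-(m1 : ℤ) + k1) := by
  set δ : ℝ := (2:ℝ) ^ (-(m1:ℤ)) with hδdef
  have hδpos : 0 < δ := by positivity
  have hδle : δ ≤ 1/32 := by
    have : ((2:ℝ)) ^ (-(m1:ℤ)) ≤ (2:ℝ) ^ (-(5:ℤ)) := by
      apply zpow_le_zpow_right₀ (by norm_num)
      omega
    simpa [hδdef] using this.trans_eq (by norm_num)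
  have key : ∀ i, 1 ≤ i → i ≤ k1 →
      ‖H i‖ < 16/9 ∧ ‖h i - H i‖ ≤ 6 * δ := by
    intro i
    induction i with
    | zero => omega
    | succ n ih =>
      intro h1n hik
      rcases Nat.lt_or_ge n 1 with hn | hn
      · interval_cases n
        constructor
        · rw [H1]; exact lt_trans (hσ k1 (by omega) le_rfl) (by norm_num)
        · rw [h1, H1]
          have := hσs k1 (by omega) le_rfl
          linarith
      · have h2 : 2 ≤ n+1 := by omega
        obtain ⟨ihH, ihe⟩ := ih hn (by omega)
        have hσb := hσ (k1 - (n+1) + 1) (by omega) (by omega)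
        have hσsb := hσs (k1 - (n+1) + 1) (by omega) (by omega)
        have hτb := hτ (k1 - (n+1) + 2) (by omega) (by omega)
        have hτsb := hτs (k1 - (n+1) + 2) (by omega) (by omega)
        have hεb := hε (n+1) h2 hik
        have HS := Hstep (n+1) h2 hik
        have hS := hstep (n+1) h2 hik
        simp only [Nat.add_sub_cancel] at HS hS
        have habsH : (0:ℝ) ≤ ‖H n‖ := norm_nonneg _
        constructor
        · rw [HS]
          calc ‖σ (k1 - (n+1) + 1) + τ (k1 - (n+1) + 2) * H n‖
              ≤ ‖σ (k1 - (n+1) + 1)‖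
                + ‖τ (k1 - (n+1) + 2)‖ * ‖H n‖ := by
                simpa [norm_mul] using
                  norm_add_le (σ (k1 - (n+1) + 1)) (τ (k1 - (n+1) + 2) * H n)
            _ < 16/9 := by nlinarith [norm_nonneg (τ (k1 - (n+1) + 2))]
        · have hrw : h (n+1) - H (n+1)
              = (σs (k1 - (n+1) + 1) - σ (k1 - (n+1) + 1))
                + ((τs (k1 - (n+1) + 2) - τ (k1 - (n+1) + 2)) * H n
                  + τs (k1 - (n+1) + 2) * (h n - H n)) + ε (n+1) := by
            rw [hS, HS]; ring
          have hτsabs : ‖τs (k1 - (n+1) + 2)‖ ≤ 1/4 + δ := by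
            calc ‖τs (k1 - (n+1) + 2)‖
                = ‖(τs (k1 - (n+1) + 2) - τ (k1 - (n+1) + 2))
                    + τ (k1 - (n+1) + 2)‖ := by ring_nf
              _ ≤ ‖τs (k1 - (n+1) + 2) - τ (k1 - (n+1) + 2)‖
                    + ‖τ (k1 - (n+1) + 2)‖ := norm_add_le _ _
              _ ≤ 1/4 + δ := by linarith
          rw [hrw]
          have t1 := norm_add_le
            ((σs (k1 - (n+1) + 1) - σ (k1 - (n+1) + 1))
              + ((τs (k1 - (n+1) + 2) - τ (k1 - (n+1) + 2)) * H n
                + τs (k1 - (n+1) + 2) * (h n - H n))) (ε (n+1))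
          have t2 := norm_add_le (σs (k1 - (n+1) + 1) - σ (k1 - (n+1) + 1))
            ((τs (k1 - (n+1) + 2) - τ (k1 - (n+1) + 2)) * H n
              + τs (k1 - (n+1) + 2) * (h n - H n))
          have t3 := norm_add_le
            ((τs (k1 - (n+1) + 2) - τ (k1 - (n+1) + 2)) * H n)
            (τs (k1 - (n+1) + 2) * (h n - H n))
          rw [norm_mul, norm_mul] at t3
          have habse : (0:ℝ) ≤ ‖h n - H n‖ := norm_nonneg _
          nlinarith [norm_nonneg
            (τs (k1 - (n+1) + 2) - τ (k1 - (n+1) + 2))]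
  obtain ⟨-, he⟩ := key k1 (by omega) le_rfl
  have hpow : (2:ℝ) ^ (-(m1:ℤ) + (k1:ℤ)) = 2 ^ (k1:ℕ) * δ := by
    rw [zpow_add₀ (by norm_num : (2:ℝ) ≠ 0), hδdef, zpow_natCast]
    ring
  have h8 : (8:ℝ) ≤ 2 ^ (k1:ℕ) := by
    calc (8:ℝ) = 2 ^ (3:ℕ) := by norm_num
      _ ≤ 2 ^ (k1:ℕ) := pow_le_pow_right₀ (by norm_num) hk1
  calc ‖h k1 - H k1‖ ≤ 6 * δ := he
    _ < 8 * δ := by linarith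
    _ ≤ 2 ^ (k1:ℕ) * δ := by nlinarith
    _ = 2 ^ (-(m1:ℤ) + (k1:ℤ)) := hpow.symm
end

section
/- (Complex analogue of Lemma 6) Let m ≥ 16 and k ≥ 1 be natural numbers. Let γ_2, …, γ_{k+1} be real numbers with |γ_i| ≤ 1/4; let e*_2, …, e*_{k+1} be complex numbers with |e*_i − exp(i·γ_i)| ≤ 2^{-m}; let ε_3, …, ε_{k+1} be complex numbers with |ε_i| < 2^{-m}. Define h_2 = e*_2 and h_i = h_{i−1}·e*_i + ε_i for 3 ≤ i ≤ k+1, and define H_2 = exp(i·γ_2) and H_i = H_{i−1}·exp(i·γ_i) for 3 ≤ i ≤ k+1 (so H_{k+1} = exp(i·(γ_2 + γ_3 + … + γ_{k+1}))). Then |h_{k+1} − H_{k+1}| < 2^{-m+2(k+1)}. -/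
/-- (Complex analogue of Lemma 6) The total error of the iterative computation
of the product `exp(i·γ_2)·exp(i·γ_3)···exp(i·γ_{k+1})` in the modified FEE
method is smaller than `2^{-m+2(k+1)}`. -/
theorem lemma6_complex_fee_error_bound (m k : ℕ) (hm : 16 ≤ m) (hk : 1 ≤ k)
    (γ : ℕ → ℝ) (es ε h H : ℕ → ℂ)
    (hγ : ∀ i, 2 ≤ i → i ≤ k + 1 → |γ i| ≤ 1 / 4)
    (hes : ∀ i, 2 ≤ i → i ≤ k + 1 →
      ‖es i - Complex.exp (Complex.I * (γ i : ℂ))‖ ≤ 2 ^ (-(m : ℤ)))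
    (hε : ∀ i, 3 ≤ i → i ≤ k + 1 → ‖ε i‖ < 2 ^ (-(m : ℤ)))
    (h2 : h 2 = es 2)
    (hstep : ∀ i, 3 ≤ i → i ≤ k + 1 → h i = h (i - 1) * es i + ε i)
    (H2 : H 2 = Complex.exp (Complex.I * (γ 2 : ℂ)))
    (Hstep : ∀ i, 3 ≤ i → i ≤ k + 1 →
      H i = H (i - 1) * Complex.exp (Complex.I * (γ i : ℂ))) :
    ‖h (k + 1) - H (k + 1)‖ < 2 ^ (-(m : ℤ) + 2 * (k + 1)) := by
  set B : ℝ := (2:ℝ) ^ (-(m:ℤ)) with hB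
  have hBpos : 0 < B := by positivity
  have hB1 : B ≤ 1 := by
    rw [hB]
    calc (2:ℝ) ^ (-(m:ℤ)) ≤ (2:ℝ) ^ (0:ℤ) := by
          apply zpow_le_zpow_right₀ one_le_two; omega
      _ = 1 := by norm_num
  have habsexp : ∀ x : ℝ, ‖Complex.exp (Complex.I * (x:ℂ))‖ = 1 := by
    intro x
    rw [Complex.norm_exp]
    simp
  have key : ∀ j, 2 ≤ j → j ≤ k + 1 →
      ‖H j‖ = 1 ∧
      ‖h j - H j‖ + 2 * B ≤ 3 * 2 ^ (j - 2) * B := by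
    intro j hj
    induction j, hj using Nat.le_induction with
    | base =>
      intro _
      refine ⟨by rw [H2]; exact habsexp _, ?_⟩
      have := hes 2 le_rfl (by omega)
      rw [h2, H2]
      norm_num
      linarith
    | succ j hj ih =>
      intro hjk
      obtain ⟨ih1, ih2⟩ := ih (by omega)
      have h3 : 3 ≤ j + 1 := by omega
      have hred : j + 1 - 1 = j := rfl
      have he1 := hes (j+1) (by omega) hjk
      have habs1 : ‖H (j+1)‖ = 1 := by
        rw [Hstep (j+1) h3 hjk, hred, norm_mul, ih1, habsexp, one_mul]
      refine ⟨habs1, ?_⟩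
      have hesb : ‖es (j+1)‖ ≤ 2 := by
        calc ‖es (j+1)‖
            = ‖(es (j+1) - Complex.exp (Complex.I * (γ (j+1):ℂ)))
                + Complex.exp (Complex.I * (γ (j+1):ℂ))‖ := by ring_nf
          _ ≤ ‖es (j+1) - Complex.exp (Complex.I * (γ (j+1):ℂ))‖
                + ‖Complex.exp (Complex.I * (γ (j+1):ℂ))‖ :=
              norm_add_le _ _
          _ ≤ B + 1 := by rw [habsexp]; linarith
          _ ≤ 2 := by linarith
      have hdecomp : h (j+1) - H (j+1)
          = (h j - H j) * es (j+1)
            + H j * (es (j+1) - Complex.exp (Complex.I * (γ (j+1):ℂ)))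
            + ε (j+1) := by
        rw [hstep (j+1) h3 hjk, Hstep (j+1) h3 hjk, hred]
        ring
      have hεb := le_of_lt (hε (j+1) h3 hjk)
      have hbound : ‖h (j+1) - H (j+1)‖
          ≤ ‖h j - H j‖ * 2 + 1 * B + B := by
        rw [hdecomp]
        calc ‖(h j - H j) * es (j+1)
              + H j * (es (j+1) - Complex.exp (Complex.I * (γ (j+1):ℂ))) + ε (j+1)‖
            ≤ ‖(h j - H j) * es (j+1)‖
              + ‖H j * (es (j+1) - Complex.exp (Complex.I * (γ (j+1):ℂ)))‖
              + ‖ε (j+1)‖ := by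
              refine le_trans (norm_add_le _ _) ?_
              gcongr
              exact norm_add_le _ _
          _ ≤ ‖h j - H j‖ * 2 + 1 * B + B := by
              rw [norm_mul, norm_mul, ih1]
              gcongr
      have hpw : (j + 1 - 2) = (j - 2) + 1 := by omega
      have hpow2 : (3:ℝ) * 2 ^ (j + 1 - 2) * B = 2 * (3 * 2 ^ (j - 2) * B) := by
        rw [hpw]; ring
      rw [hpow2]
      nlinarith [norm_nonneg (h j - H j)]
  obtain ⟨-, hfin⟩ := key (k+1) (by omega) le_rfl
  have hpow : (2:ℝ) ^ (-(m:ℤ) + 2 * ((k:ℤ) + 1)) = 2 ^ (2 * (k + 1)) * B := by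
    rw [hB, ← zpow_natCast (2:ℝ) (2 * (k + 1)), ← zpow_add₀ (by norm_num : (2:ℝ) ≠ 0)]
    congr 1
    push_cast
    ring
  have hk1 : k + 1 - 2 = k - 1 := by omega
  have hgrow : (3:ℝ) * 2 ^ (k - 1) ≤ 2 ^ (2 * (k + 1)) := by
    calc (3:ℝ) * 2 ^ (k - 1) ≤ 4 * 2 ^ (k - 1) := by
          have : (0:ℝ) < 2 ^ (k - 1) := by positivity
          linarith
      _ = 2 ^ (k + 1) := by
          rw [show k + 1 = (k - 1) + 2 by omega]; ring
      _ ≤ 2 ^ (2 * (k + 1)) := by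
          apply pow_le_pow_right₀ one_le_two; omega
  push_cast
  rw [hpow]
  rw [hk1] at hfin
  nlinarith
end
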